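/- arXiv:1901.00347 — 2 statements merged into one kernel-verified Lean document; each statement's English description precedes it below -/
import Mathlib

section
/- Let Γ be a group with a finite generating set S ⊆ Γ satisfying 1 ∉ S, and let R be a set of reduced words in the free group on S such that the kernel of the canonical homomorphism from the free group on S onto Γ equals the normal closure of R. Then every closed walk of the Cayley graph Cay(Γ,S) is generated by the set of all closed walks induced by the relators r ∈ R at the vertices of Cay(Γ,S). -/
open SimpleGraph

/-- A drawing of a simple graph `G` in the euclidean plane: an injective map `vmap` of the
vertices into `ℝ²` together with, for each edge `{x, y}`, a continuous injective arc from
`vmap x` to `vmap y` (parametrised by `[0,1]`, and independent of the orientation of the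
edge), such that the arcs of two distinct edges meet only in the images of their common
endvertices, and each arc meets the image of the vertex set only in the images of its two
endvertices. -/
structure PlaneDrawing {V : Type*} (G : SimpleGraph V) where
  vmap : V → ℝ × ℝ
  vmap_inj : Function.Injective vmap
  arc : V → V → ℝ → ℝ × ℝ
  arc_continuousOn : ∀ {x y : V}, G.Adj x y → ContinuousOn (arc x y) (Set.Icc 0 1)
  arc_injOn : ∀ {x y : V}, G.Adj x y → Set.InjOn (arc x y) (Set.Icc 0 1)
  arc_zero : ∀ {x y : V}, G.Adj x y → arc x y 0 = vmap x
  arc_one : ∀ {x y : V}, G.Adj x y → arc x y 1 = vmap y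
  arc_symm : ∀ {x y : V}, G.Adj x y → ∀ t ∈ Set.Icc (0:ℝ) 1, arc y x t = arc x y (1 - t)
  arc_arc : ∀ {x y z w : V}, G.Adj x y → G.Adj z w → s(x, y) ≠ s(z, w) →
    (arc x y '' Set.Icc 0 1) ∩ (arc z w '' Set.Icc 0 1) ⊆
      vmap '' ({x, y} ∩ {z, w} : Set V)
  arc_vmap : ∀ {x y : V}, G.Adj x y →
    (arc x y '' Set.Icc 0 1) ∩ Set.range vmap ⊆ {vmap x, vmap y}

/-- A simple graph is planar if it admits a drawing in the plane. -/
def IsPlanarGraph {V : Type*} (G : SimpleGraph V) : Prop :=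
  Nonempty (PlaneDrawing G)

/-- The Cayley graph of a group `Γ` with respect to a generating set `S ⊆ Γ` with `1 ∉ S`:
the simple graph on `Γ` in which distinct `x, y` are adjacent iff `x⁻¹ * y ∈ S` or
`y⁻¹ * x ∈ S`. -/
def cayley (Γ : Type*) [Group Γ] (S : Set Γ) : SimpleGraph Γ where
  Adj x y := x ≠ y ∧ (x⁻¹ * y ∈ S ∨ y⁻¹ * x ∈ S)
  symm := by
    constructor
    rintro x y ⟨hxy, h⟩
    exact ⟨hxy.symm, h.symm⟩
  loopless := by
    constructor
    rintro x ⟨hx, -⟩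
    exact hx rfl

open SimpleGraph

/-- The set of closed walks of a simple graph `G` generated by a family `𝒱` of closed walks:
the smallest family of closed walks containing `𝒱` and all trivial closed walks which is
closed under concatenation of two closed walks at the same base vertex, rotation (cyclically
shifting the base point), reversal, and insertion and deletion of spikes. -/
inductive WalkGen {V : Type*} [DecidableEq V] (G : SimpleGraph V)
    (𝒱 : ∀ v : V, Set (G.Walk v v)) : ∀ v : V, G.Walk v v → Prop
  | base {v : V} (w : G.Walk v v) : w ∈ 𝒱 v → WalkGen G 𝒱 v w
  | nil (v : V) : WalkGen G 𝒱 v Walk.nil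
  | concat {v : V} {w₁ w₂ : G.Walk v v} :
      WalkGen G 𝒱 v w₁ → WalkGen G 𝒱 v w₂ → WalkGen G 𝒱 v (w₁.append w₂)
  | rotate {v u : V} {w : G.Walk v v} (hw : WalkGen G 𝒱 v w) (h : u ∈ w.support) :
      WalkGen G 𝒱 u (w.rotate u h)
  | reverse {v : V} {w : G.Walk v v} : WalkGen G 𝒱 v w → WalkGen G 𝒱 v w.reverse
  | addSpike {v x y : V} (p : G.Walk v x) (q : G.Walk x v) (h : G.Adj x y) :
      WalkGen G 𝒱 v (p.append q) →
      WalkGen G 𝒱 v (p.append (Walk.cons h (Walk.cons h.symm q)))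
  | delSpike {v x y : V} (p : G.Walk v x) (q : G.Walk x v) (h : G.Adj x y) :
      WalkGen G 𝒱 v (p.append (Walk.cons h (Walk.cons h.symm q))) →
      WalkGen G 𝒱 v (p.append q)

/-- The list of vertices of the closed walk induced by the reduced word of `r : FreeGroup S`
at the vertex `g` of the Cayley graph `Cay(Γ,S)`: the partial products
`g, g s₁^{ε₁}, g s₁^{ε₁} s₂^{ε₂}, …`. -/
noncomputable def relatorTrace {Γ : Type*} [Group Γ] {S : Set Γ} (g : Γ)
    (r : FreeGroup S) : List Γ :=
  letI : DecidableEq S := Classical.decEq _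
  r.toWord.scanl (fun x p => x * (if p.2 then (p.1 : Γ) else (p.1 : Γ)⁻¹)) g

namespace CayleyAux

/-! ### List lemmas -/

lemma scanl_append {α β : Type*} (f : α → β → α) : ∀ (l₁ l₂ : List β) (a : α),
    (l₁ ++ l₂).scanl f a = l₁.scanl f a ++ (l₂.scanl f (l₁.foldl f a)).tail
  | [], l₂, a => by cases l₂ <;> simp
  | p :: l₁, l₂, a => by simp [scanl_append f l₁ l₂ (f a p)]

lemma scanl_ne_nil {α β : Type*} (f : α → β → α) (l : List β) (a : α) :
    l.scanl f a ≠ [] := by cases l <;> simp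

/-! ### Walks determined by their supports -/

variable {V : Type*} {G : SimpleGraph V}

lemma support_injective : ∀ {u v : V} {w₁ w₂ : G.Walk u v},
    w₁.support = w₂.support → w₁ = w₂ := by
  intro u v w₁
  induction w₁ with
  | nil =>
    intro w₂ h
    cases w₂ with
    | nil => rfl
    | cons h' p =>
      exfalso
      rw [Walk.support_nil, Walk.support_cons] at h
      have := congrArg List.length h
      simp at this
  | cons h' p ih =>
    intro w₂ hh
    cases w₂ with
    | nil =>
      exfalso
      rw [Walk.support_nil, Walk.support_cons] at hh
      have := congrArg List.length hh
      simp at this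
    | cons h'' q =>
      rw [Walk.support_cons, Walk.support_cons] at hh
      have h2 : p.support = q.support := (List.cons.inj hh).2
      have hb := congrArg List.head? h2
      rw [Walk.support_eq_cons p, Walk.support_eq_cons q] at hb
      simp only [List.head?_cons, Option.some.injEq] at hb
      subst hb
      rw [ih h2]

/-! ### Rotation at the second vertex -/

variable [DecidableEq V]

lemma takeUntil_start : ∀ {v u : V} (w : G.Walk v u) (hm : v ∈ w.support),
    w.takeUntil v hm = Walk.nil
  | _, _, Walk.nil, _ => rfl
  | _, _, Walk.cons _ _, _ => by
    rw [Walk.takeUntil]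
    simp

lemma dropUntil_start : ∀ {v u : V} (w : G.Walk v u) (hm : v ∈ w.support),
    w.dropUntil v hm = w
  | _, _, Walk.nil, _ => rfl
  | _, _, Walk.cons _ _, _ => by
    rw [Walk.dropUntil]
    simp

lemma rotate_cons {u v : V} (h : G.Adj u v) (w : G.Walk v u)
    (hm : v ∈ (Walk.cons h w).support) :
    (Walk.cons h w).rotate v hm = w.append (Walk.cons h Walk.nil) := by
  have hne : u ≠ v := h.ne
  rw [Walk.rotate, Walk.takeUntil, Walk.dropUntil, dif_neg hne, dif_neg hne,
    takeUntil_start, dropUntil_start]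

/-! ### Words and walks in Cayley graphs -/

variable {Γ : Type*} [Group Γ] {S : Set Γ}

def cStep (g : Γ) (p : S × Bool) : Γ := g * (if p.2 then (p.1 : Γ) else (p.1 : Γ)⁻¹)

lemma cStep_ne (h1 : (1 : Γ) ∉ S) (g : Γ) (p : S × Bool) : cStep g p ≠ g := by
  have hs : (p.1 : Γ) ≠ 1 := fun h => h1 (h ▸ p.1.2)
  unfold cStep
  rcases p.2 with _ | _ <;> simp_all

lemma adj_cStep (h1 : (1 : Γ) ∉ S) (g : Γ) (p : S × Bool) :
    (cayley Γ S).Adj g (cStep g p) := by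
  refine ⟨fun h => cStep_ne h1 g p h.symm, ?_⟩
  unfold cStep
  rcases hb : p.2 with _ | _
  · right; simp [mul_assoc, p.1.2]
  · left; simp [p.1.2]

lemma cStep_cStep (g : Γ) (x : S) (b : Bool) :
    cStep (cStep g (x, b)) (x, !b) = g := by
  rcases b with _ | _ <;> simp [cStep, mul_assoc]

def walkOfWord (h1 : (1 : Γ) ∉ S) : (g : Γ) → (l : List (S × Bool)) →
    (cayley Γ S).Walk g (l.foldl cStep g)
  | _, [] => Walk.nil
  | g, p :: l => Walk.cons (adj_cStep h1 g p) (walkOfWord h1 (cStep g p) l)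

lemma support_walkOfWord (h1 : (1 : Γ) ∉ S) : ∀ (g : Γ) (l : List (S × Bool)),
    (walkOfWord h1 g l).support = l.scanl cStep g
  | _, [] => rfl
  | g, p :: l => by
    rw [List.scanl_cons, ← support_walkOfWord h1 (cStep g p) l]; rfl

lemma foldl_cStep_eq' : ∀ (l : List (S × Bool)) (g : Γ),
    l.foldl cStep g = g * (l.map fun p => cond p.2 (p.1 : Γ) (p.1 : Γ)⁻¹).prod
  | [], g => by simp
  | p :: l, g => by
    simp only [List.foldl_cons, List.map_cons, List.prod_cons, foldl_cStep_eq' l,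
      cStep, Bool.cond_eq_ite, mul_assoc]

lemma foldl_cStep_eq (g : Γ) (l : List (S × Bool)) :
    l.foldl cStep g = g * FreeGroup.lift (fun s : S => (s : Γ)) (FreeGroup.mk l) := by
  rw [FreeGroup.lift_mk, foldl_cStep_eq']

lemma foldl_congr {g : Γ} {l₁ l₂ : List (S × Bool)}
    (h : FreeGroup.mk l₁ = FreeGroup.mk l₂) :
    l₁.foldl cStep g = l₂.foldl cStep g := by
  rw [foldl_cStep_eq, foldl_cStep_eq, h]

lemma foldl_invRev (l : List (S × Bool)) (g : Γ) :
    (FreeGroup.invRev l).foldl cStep (l.foldl cStep g) = g := by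
  rw [foldl_cStep_eq, foldl_cStep_eq, ← FreeGroup.inv_mk, map_inv]
  simp [mul_assoc]

lemma scanl_invRev : ∀ (l : List (S × Bool)) (g : Γ),
    (FreeGroup.invRev l).scanl cStep (l.foldl cStep g) = (l.scanl cStep g).reverse
  | [], g => by simp [FreeGroup.invRev]
  | p :: l, g => by
    obtain ⟨x, b⟩ := p
    have e1 : FreeGroup.invRev ((x, b) :: l) = FreeGroup.invRev l ++ [(x, !b)] := by
      simp [FreeGroup.invRev]
    rw [List.foldl_cons, e1, scanl_append, scanl_invRev l (cStep g (x, b)),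
      foldl_invRev l (cStep g (x, b))]
    simp [cStep_cStep]

/-! ### Conjugation lemma -/

variable [DecidableEq Γ] (𝒱 : ∀ v : Γ, Set ((cayley Γ S).Walk v v))

lemma gen_conj : ∀ {g x : Γ} (p : (cayley Γ S).Walk g x) (c : (cayley Γ S).Walk x x),
    WalkGen (cayley Γ S) 𝒱 x c →
      WalkGen (cayley Γ S) 𝒱 g ((p.append c).append p.reverse) := by
  intro g x p
  induction p with
  | nil => intro c hc; simpa using hc
  | @cons g b x h p' ih =>
    intro c hc
    have ih' := ih c hc
    have h2 : WalkGen (cayley Γ S) 𝒱 b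
        (Walk.cons h.symm (Walk.cons h.symm.symm ((p'.append c).append p'.reverse))) :=
      WalkGen.addSpike Walk.nil ((p'.append c).append p'.reverse) h.symm ih'
    have hm : g ∈ (Walk.cons h.symm
        (Walk.cons h.symm.symm ((p'.append c).append p'.reverse))).support := by simp
    have h3 := WalkGen.rotate h2 hm
    rw [rotate_cons, Walk.cons_append] at h3
    rw [Walk.reverse_cons, Walk.cons_append, Walk.cons_append, Walk.append_assoc]
    exact h3

/-! ### Generation of word-walks -/

def genWord (h1 : (1 : Γ) ∉ S) (g : Γ) (l : List (S × Bool))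
    (hc : l.foldl cStep g = g) : Prop :=
  WalkGen (cayley Γ S) 𝒱 g ((walkOfWord h1 g l).copy rfl hc)

variable (h1 : (1 : Γ) ∉ S)

lemma genWord_step {l₁ l₂ : List (S × Bool)} (hs : FreeGroup.Red.Step l₁ l₂) (g : Γ)
    (hc₁ : l₁.foldl cStep g = g) (hc₂ : l₂.foldl cStep g = g) :
    genWord 𝒱 h1 g l₁ hc₁ ↔ genWord 𝒱 h1 g l₂ hc₂ := by
  cases hs with
  | @not L₁ L₂ x b =>
    have hq : L₂.foldl cStep (L₁.foldl cStep g) = g := by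
      rw [← List.foldl_append]; exact hc₂
    set c₀ := L₁.foldl cStep g with hc₀
    set p : (cayley Γ S).Walk g c₀ := walkOfWord h1 g L₁ with hp
    set q : (cayley Γ S).Walk c₀ g := (walkOfWord h1 c₀ L₂).copy rfl hq with hqq
    have H := adj_cStep h1 c₀ (x, b)
    have e : cStep (cStep c₀ (x, b)) (x, !b) = c₀ := cStep_cStep c₀ x b
    have eA : (walkOfWord h1 g (L₁ ++ L₂)).copy rfl hc₂ = p.append q := by
      apply support_injective
      rw [Walk.support_copy, support_walkOfWord, Walk.support_append, hp, hqq,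
        Walk.support_copy, support_walkOfWord, support_walkOfWord, scanl_append]
    have eB : (walkOfWord h1 g (L₁ ++ (x, b) :: (x, !b) :: L₂)).copy rfl hc₁ =
        p.append (Walk.cons H (Walk.cons H.symm q)) := by
      apply support_injective
      rw [Walk.support_copy, support_walkOfWord, Walk.support_append, hp,
        support_walkOfWord, Walk.support_cons, Walk.support_cons, hqq,
        Walk.support_copy, support_walkOfWord, scanl_append]
      simp only [List.scanl_cons]
      rw [e]
    unfold genWord
    rw [eA, eB]
    exact ⟨WalkGen.delSpike p q H, WalkGen.addSpike p q H⟩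

lemma genWord_red {l₁ l₂ : List (S × Bool)} (h : FreeGroup.Red l₁ l₂) (g : Γ) :
    ∀ (hc₁ : l₁.foldl cStep g = g) (hc₂ : l₂.foldl cStep g = g),
      genWord 𝒱 h1 g l₁ hc₁ ↔ genWord 𝒱 h1 g l₂ hc₂ := by
  induction h with
  | refl => intro hc₁ hc₂; exact Iff.rfl
  | @tail m l₂ hred hstep ih =>
    intro hc₁ hc₂
    have hmk : FreeGroup.mk m = FreeGroup.mk l₂ := Quot.sound hstep
    have hcm : m.foldl cStep g = g := by rw [foldl_congr hmk]; exact hc₂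
    exact (ih hc₁ hcm).trans (genWord_step 𝒱 h1 hstep g hcm hc₂)

lemma genWord_congr {l₁ l₂ : List (S × Bool)} (h : FreeGroup.mk l₁ = FreeGroup.mk l₂)
    (g : Γ) (hc₁ : l₁.foldl cStep g = g) (hc₂ : l₂.foldl cStep g = g) :
    genWord 𝒱 h1 g l₁ hc₁ ↔ genWord 𝒱 h1 g l₂ hc₂ := by
  obtain ⟨L, hL₁, hL₂⟩ := FreeGroup.Red.exact.mp h
  have hmL : FreeGroup.mk l₁ = FreeGroup.mk L :=
    FreeGroup.Red.exact.mpr ⟨L, hL₁, Relation.ReflTransGen.refl⟩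
  have hcL : L.foldl cStep g = g := by rw [← foldl_congr hmL]; exact hc₁
  exact (genWord_red 𝒱 h1 hL₁ g hc₁ hcL).trans (genWord_red 𝒱 h1 hL₂ g hc₂ hcL).symm

lemma key (R : Set (FreeGroup S))
    (hker : (FreeGroup.lift (fun s : S => (s : Γ))).ker = Subgroup.normalClosure R)
    (hV : ∀ (x : Γ) (r : FreeGroup S), r ∈ R → ∀ c : (cayley Γ S).Walk x x,
      c.support = relatorTrace x r → c ∈ 𝒱 x)
    {n : FreeGroup S} (hn : n ∈ Subgroup.normalClosure R) :
    ∀ (g : Γ) (l : List (S × Bool)) (_ : FreeGroup.mk l = n)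
      (hc : l.foldl cStep g = g), genWord 𝒱 h1 g l hc := by
  have hπ : ∀ m : FreeGroup S, m ∈ Subgroup.normalClosure R →
      FreeGroup.lift (fun s : S => (s : Γ)) m = 1 := by
    intro m hm
    rw [← hker] at hm
    exact hm
  have hn' : n ∈ Subgroup.closure (Group.conjugatesOfSet R) := hn
  clear hn
  induction hn' using Subgroup.closure_induction with
  | mem m hm =>
    intro g l hmk hc
    rw [Group.mem_conjugatesOfSet_iff] at hm
    obtain ⟨r, hr, hconj⟩ := hm
    obtain ⟨u, hu⟩ := isConj_iff.mp hconj
    have hmk' : FreeGroup.mk (u.toWord ++ (r.toWord ++ FreeGroup.invRev u.toWord)) = m := by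
      rw [← FreeGroup.mul_mk, ← FreeGroup.mul_mk, ← FreeGroup.inv_mk,
        FreeGroup.mk_toWord, FreeGroup.mk_toWord, ← mul_assoc, hu]
    have hc' : (u.toWord ++ (r.toWord ++ FreeGroup.invRev u.toWord)).foldl cStep g = g := by
      rw [foldl_congr (hmk'.trans hmk.symm)]; exact hc
    rw [genWord_congr 𝒱 h1 (hmk.trans hmk'.symm) g hc hc']
    -- the base relator walk
    have hrk : FreeGroup.lift (fun s : S => (s : Γ)) r = 1 :=
      hπ r (Subgroup.subset_normalClosure hr)
    set x := u.toWord.foldl cStep g with hx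
    have hcr : r.toWord.foldl cStep x = x := by
      rw [foldl_cStep_eq, FreeGroup.mk_toWord, hrk, mul_one]
    set c : (cayley Γ S).Walk x x := (walkOfWord h1 x r.toWord).copy rfl hcr with hcdef
    have hcgen : WalkGen (cayley Γ S) 𝒱 x c := by
      refine WalkGen.base c (hV x r hr c ?_)
      rw [hcdef, Walk.support_copy, support_walkOfWord]
      unfold relatorTrace cStep
      congr 1
      exact congrArg (fun i => @FreeGroup.toWord (↥S) i r) (Subsingleton.elim _ _)
    set p : (cayley Γ S).Walk g x := walkOfWord h1 g u.toWord with hpdef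
    have hgen := gen_conj 𝒱 p c hcgen
    have eW : (walkOfWord h1 g (u.toWord ++ (r.toWord ++ FreeGroup.invRev u.toWord))).copy
        rfl hc' = (p.append c).append p.reverse := by
      apply support_injective
      rw [Walk.support_copy, support_walkOfWord, Walk.support_append, Walk.support_append,
        Walk.support_reverse, hpdef, hcdef, Walk.support_copy, support_walkOfWord,
        support_walkOfWord, scanl_append, scanl_append, hcr,
        List.tail_append_of_ne_nil (scanl_ne_nil _ _ _)]
      rw [← hx, ← List.append_assoc]
      congr 1
      have := scanl_invRev u.toWord g
      rw [← hx] at this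
      rw [this]
    unfold genWord
    rw [eW]
    exact hgen
  | one =>
    intro g l hmk hc
    have h0 : FreeGroup.mk l = FreeGroup.mk ([] : List (S × Bool)) := by
      rw [hmk, FreeGroup.one_eq_mk]
    have hc0 : ([] : List (S × Bool)).foldl cStep g = g := rfl
    rw [genWord_congr 𝒱 h1 h0 g hc hc0]
    exact WalkGen.nil g
  | mul m₁ m₂ hm₁ hm₂ ih₁ ih₂ =>
    intro g l hmk hc
    have hmk' : FreeGroup.mk (m₁.toWord ++ m₂.toWord) = m₁ * m₂ := by
      rw [← FreeGroup.mul_mk, FreeGroup.mk_toWord, FreeGroup.mk_toWord]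
    have hc' : (m₁.toWord ++ m₂.toWord).foldl cStep g = g := by
      rw [foldl_congr (hmk'.trans hmk.symm)]; exact hc
    rw [genWord_congr 𝒱 h1 (hmk.trans hmk'.symm) g hc hc']
    have hc₁ : m₁.toWord.foldl cStep g = g := by
      rw [foldl_cStep_eq, FreeGroup.mk_toWord, hπ m₁ hm₁, mul_one]
    have hc₂ : m₂.toWord.foldl cStep g = g := by
      rw [foldl_cStep_eq, FreeGroup.mk_toWord, hπ m₂ hm₂, mul_one]
    have e : (walkOfWord h1 g (m₁.toWord ++ m₂.toWord)).copy rfl hc' =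
        ((walkOfWord h1 g m₁.toWord).copy rfl hc₁).append
          ((walkOfWord h1 g m₂.toWord).copy rfl hc₂) := by
      apply support_injective
      rw [Walk.support_copy, support_walkOfWord, Walk.support_append, Walk.support_copy,
        Walk.support_copy, support_walkOfWord, support_walkOfWord, scanl_append, hc₁]
    unfold genWord
    rw [e]
    exact WalkGen.concat (ih₁ g m₁.toWord FreeGroup.mk_toWord hc₁)
      (ih₂ g m₂.toWord FreeGroup.mk_toWord hc₂)
  | inv m hm ih =>
    intro g l hmk hc
    have hmk' : FreeGroup.mk (FreeGroup.invRev m.toWord) = m⁻¹ := by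
      rw [← FreeGroup.inv_mk, FreeGroup.mk_toWord]
    have hc' : (FreeGroup.invRev m.toWord).foldl cStep g = g := by
      rw [foldl_congr (hmk'.trans hmk.symm)]; exact hc
    rw [genWord_congr 𝒱 h1 (hmk.trans hmk'.symm) g hc hc']
    have hcm : m.toWord.foldl cStep g = g := by
      rw [foldl_cStep_eq, FreeGroup.mk_toWord, hπ m hm, mul_one]
    have e : (walkOfWord h1 g (FreeGroup.invRev m.toWord)).copy rfl hc' =
        ((walkOfWord h1 g m.toWord).copy rfl hcm).reverse := by
      apply support_injective
      rw [Walk.support_copy, support_walkOfWord, Walk.support_reverse, Walk.support_copy,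
        support_walkOfWord]
      have := scanl_invRev m.toWord g
      rw [hcm] at this
      rw [this]
    unfold genWord
    rw [e]
    exact WalkGen.reverse (ih g m.toWord FreeGroup.mk_toWord hcm)

/-! ### Extracting the word of a walk -/

noncomputable def letterOf {x y : Γ} (h : (cayley Γ S).Adj x y) : S × Bool :=
  letI := Classical.dec (x⁻¹ * y ∈ S)
  if hm : x⁻¹ * y ∈ S then (⟨x⁻¹ * y, hm⟩, true)
  else (⟨y⁻¹ * x, h.2.resolve_left hm⟩, false)

lemma cStep_letterOf {x y : Γ} (h : (cayley Γ S).Adj x y) :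
    cStep x (letterOf h) = y := by
  unfold letterOf cStep
  split
  · simp
  · simp [mul_inv_rev, ← mul_assoc]

noncomputable def wordOf : {x y : Γ} → (cayley Γ S).Walk x y → List (S × Bool)
  | _, _, Walk.nil => []
  | _, _, Walk.cons h w => letterOf h :: wordOf w

lemma scanl_wordOf : ∀ {x y : Γ} (w : (cayley Γ S).Walk x y),
    (wordOf w).scanl cStep x = w.support
  | _, _, Walk.nil => rfl
  | x, y, Walk.cons h w => by
    rw [wordOf, List.scanl_cons, cStep_letterOf h, scanl_wordOf w, Walk.support_cons]

lemma foldl_wordOf : ∀ {x y : Γ} (w : (cayley Γ S).Walk x y),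
    (wordOf w).foldl cStep x = y
  | _, _, Walk.nil => rfl
  | x, y, Walk.cons h w => by
    rw [wordOf, List.foldl_cons, cStep_letterOf h, foldl_wordOf w]

end CayleyAux

/-- Let `Γ` be generated by a finite set `S` with `1 ∉ S`, and let `R` be a set of words in
the free group on `S` whose normal closure is the kernel of the canonical homomorphism
`FreeGroup S →* Γ`.  Then every closed walk of the Cayley graph `Cay(Γ,S)` is generated by
the closed walks induced by the relators `r ∈ R` at the vertices of `Cay(Γ,S)`. -/
theorem stmt5 {Γ : Type*} [Group Γ] [DecidableEq Γ] (S : Set Γ) (hfin : S.Finite)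
    (h1 : (1 : Γ) ∉ S) (hgen : Subgroup.closure S = ⊤) (R : Set (FreeGroup S))
    (hker : (FreeGroup.lift (fun s : S => (s : Γ))).ker = Subgroup.normalClosure R) :
    ∀ (g : Γ) (w : (cayley Γ S).Walk g g),
      WalkGen (cayley Γ S)
        (fun u => {c : (cayley Γ S).Walk u u | ∃ r ∈ R, c.support = relatorTrace u r})
        g w := by
  intro g w
  set 𝒱 : ∀ v : Γ, Set ((cayley Γ S).Walk v v) :=
    fun u => {c : (cayley Γ S).Walk u u | ∃ r ∈ R, c.support = relatorTrace u r} with h𝒱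
  have hfold : (CayleyAux.wordOf w).foldl CayleyAux.cStep g = g := CayleyAux.foldl_wordOf w
  have hmem : FreeGroup.mk (CayleyAux.wordOf w) ∈ Subgroup.normalClosure R := by
    rw [← hker, MonoidHom.mem_ker]
    have h2 := CayleyAux.foldl_cStep_eq g (CayleyAux.wordOf w)
    rw [hfold] at h2
    exact (left_eq_mul.mp h2)
  have hkey := CayleyAux.key 𝒱 h1 R hker
    (fun x r hr c hs => ⟨r, hr, hs⟩) hmem g (CayleyAux.wordOf w) rfl hfold
  have e : (CayleyAux.walkOfWord h1 g (CayleyAux.wordOf w)).copy rfl hfold = w := by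
    apply CayleyAux.support_injective
    rw [Walk.support_copy, CayleyAux.support_walkOfWord, CayleyAux.scanl_wordOf]
  unfold CayleyAux.genWord at hkey
  rw [e] at hkey
  exact hkey
end

section
/- In any simple graph G, every indecomposable closed walk of positive length is a cycle: its vertices are pairwise distinct except that its first vertex equals its last vertex (in particular its length is at least 3). Here a closed walk W is indecomposable if it is not generated by the set of all closed walks of G whose length is strictly smaller than the length of W. -/
open SimpleGraph

section Aux

variable {V : Type*} [DecidableEq V] {G : SimpleGraph V}

lemma takeUntil_start' {u v : V} (p : G.Walk u v) (h : u ∈ p.support) :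
    p.takeUntil u h = Walk.nil := by
  cases p <;> simp [Walk.takeUntil]

lemma dropUntil_start' {u v : V} (p : G.Walk u v) (h : u ∈ p.support) :
    p.dropUntil u h = p := by
  have := p.take_spec h
  rw [takeUntil_start'] at this
  simpa using this

lemma singleRot {𝒱 : ∀ v : V, Set (G.Walk v v)} {u b : V} (h : G.Adj u b) (t : G.Walk b u)
    (hg : WalkGen G 𝒱 u (Walk.cons h t)) :
    WalkGen G 𝒱 b (t.append (Walk.cons h Walk.nil)) := by
  have hb : b ∈ (Walk.cons h t).support := by simp
  have hrot := hg.rotate hb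
  have hne : u ≠ b := G.ne_of_adj h
  have h1 : (Walk.cons h t).takeUntil b hb = Walk.cons h Walk.nil := by
    simp [Walk.takeUntil, hne, takeUntil_start']
  have h2 : (Walk.cons h t).dropUntil b hb = t := by
    simp [Walk.dropUntil, hne, dropUntil_start']
  rwa [Walk.rotate, h1, h2] at hrot

lemma rotGen {𝒱 : ∀ v : V, Set (G.Walk v v)} :
    ∀ {v u : V} (p : G.Walk v u) (q : G.Walk u v),
      WalkGen G 𝒱 v (p.append q) → WalkGen G 𝒱 u (q.append p) := by
  intro v u p
  induction p with
  | nil =>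
    intro q hq
    rw [Walk.append_nil]
    rwa [Walk.nil_append] at hq
  | @cons a b c h p ih =>
    intro q hq
    rw [Walk.cons_append] at hq
    have step := singleRot h (p.append q) hq
    rw [← Walk.append_assoc] at step
    have := ih (q.append (Walk.cons h Walk.nil)) step
    rwa [← Walk.append_assoc, Walk.cons_nil_append] at this

end Aux

lemma split_of_mem {V : Type*} [DecidableEq V] {G : SimpleGraph V} {b v u : V}
    (t : G.Walk b v) (h2 : 2 ≤ t.support.count u) :
    ∃ (t1 : G.Walk b u) (d : G.Walk u v), t = t1.append d ∧ u ∈ d.support.tail := by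
  have hu : u ∈ t.support := List.count_pos_iff.mp (by omega)
  refine ⟨t.takeUntil u hu, t.dropUntil u hu, (t.take_spec hu).symm, ?_⟩
  have hsup : t.support = (t.takeUntil u hu).support ++ (t.dropUntil u hu).support.tail := by
    conv_lhs => rw [← t.take_spec hu]
    exact Walk.support_append _ _
  rw [hsup, List.count_append, t.count_support_takeUntil_eq_one hu] at h2
  exact List.count_pos_iff.mp (by omega)

/-- Every indecomposable closed walk of positive length in a simple graph is a cycle: its
vertices are pairwise distinct except that its first vertex equals its last vertex, and in
particular its length is at least 3.  Here a closed walk `w` is indecomposable if it is not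
generated by the set of all closed walks of `G` of length strictly smaller than that of `w`. -/
theorem stmt6 {V : Type*} [DecidableEq V] (G : SimpleGraph V) {v : V} (w : G.Walk v v)
    (hpos : 0 < w.length)
    (hind : ¬ WalkGen G (fun u => {c : G.Walk u u | c.length < w.length}) v w) :
    w.support.tail.Nodup ∧ 3 ≤ w.length := by
  cases w with
  | nil => simp at hpos
  | @cons _ b _ hadj t =>
    constructor
    · -- Nodup part
      by_contra hdup
      rw [Walk.support_cons, List.tail_cons] at hdup
      obtain ⟨u, hu⟩ := List.exists_duplicate_iff_not_nodup.mpr hdup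
      rw [List.duplicate_iff_two_le_count] at hu
      obtain ⟨t1, d, rfl, hd⟩ := split_of_mem t hu
      cases d with
      | nil => simp at hd
      | @cons _ c _ h2 s =>
        rw [Walk.support_cons, List.tail_cons] at hd
        obtain ⟨s1, s2, hs, -⟩ :
            ∃ (s1 : G.Walk c u) (s2 : G.Walk u v), s = s1.append s2 ∧ True :=
          ⟨s.takeUntil u hd, s.dropUntil u hd, (s.take_spec hd).symm, trivial⟩
        subst hs
        set L := (Walk.cons hadj (t1.append (Walk.cons h2 (s1.append s2)))).length with hL
        have hLval : L = t1.length + s1.length + s2.length + 2 := by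
          simp [hL, Walk.length_append, Walk.length_cons]; omega
        have hc1 : WalkGen G (fun u => {c : G.Walk u u | c.length < L}) u
            (Walk.cons h2 s1) := by
          apply WalkGen.base
          simp only [Set.mem_setOf_eq, Walk.length_cons, hLval]
          omega
        have hc2 : WalkGen G (fun u => {c : G.Walk u u | c.length < L}) u
            (s2.append (Walk.cons hadj t1)) := by
          apply WalkGen.base
          simp only [Set.mem_setOf_eq, Walk.length_append, Walk.length_cons, hLval]
          omega
        have hcat := hc1.concat hc2
        have heq : (Walk.cons h2 s1).append (s2.append (Walk.cons hadj t1))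
            = (Walk.cons h2 (s1.append s2)).append (Walk.cons hadj t1) := by
          simp [Walk.cons_append, Walk.append_assoc]
        rw [heq] at hcat
        have hrot := rotGen (𝒱 := fun u => {c : G.Walk u u | c.length < L})
          (Walk.cons h2 (s1.append s2)) (Walk.cons hadj t1) hcat
        exact hind (by simpa [Walk.cons_append] using hrot)
    · -- length part
      cases t with
      | nil => exact absurd rfl hadj.ne
      | @cons _ c _ h' t' =>
        cases t' with
        | nil =>
          exfalso
          apply hind
          have h0 : WalkGen G
              (fun u => {c : G.Walk u u | c.length <
                (Walk.cons hadj (Walk.cons h' Walk.nil)).length}) v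
              (Walk.nil.append Walk.nil) := WalkGen.nil v
          have := WalkGen.addSpike Walk.nil Walk.nil hadj h0
          simpa using this
        | cons h'' t'' => simp [Walk.length_cons]
end
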